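/- There exists an absolute constant C > 0 such that for all t ≥ 0, all nonzero integers k, σ, and all reals ξ, ρ: ⟨t⟩²/(|k|·⟨ξ/k⟩²·⟨t − ξ/k⟩·⟨t − ρ/σ⟩) ≤ C · ⟨σ,ρ⟩². -/
import Mathlib


/-- Japanese bracket `⟨a⟩ = (1 + a²)^{1/2}` of a real number. -/
noncomputable def jb (a : ℝ) : ℝ := Real.sqrt (1 + a ^ 2)

/-- Double Japanese bracket `⟨σ,ρ⟩ = (1 + σ² + ρ²)^{1/2}`. -/
noncomputable def jb2 (σ : ℤ) (ρ : ℝ) : ℝ := Real.sqrt (1 + (σ : ℝ) ^ 2 + ρ ^ 2)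

lemma jb_sq (a : ℝ) : (jb a) ^ 2 = 1 + a ^ 2 := by
  rw [jb, Real.sq_sqrt]; positivity

lemma one_le_jb (a : ℝ) : 1 ≤ jb a := by
  have h := Real.sqrt_le_sqrt (show (1:ℝ) ≤ 1 + a ^ 2 by nlinarith [sq_nonneg a])
  simpa [jb] using h

lemma jb_tri (t a : ℝ) : jb t ≤ Real.sqrt 2 * jb a * jb (t - a) := by
  rw [jb, jb, jb, ← Real.sqrt_mul (by norm_num), ← Real.sqrt_mul (by positivity)]
  exact Real.sqrt_le_sqrt (by nlinarith [sq_nonneg (a * (t - a)), sq_nonneg (t - 2*a)])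

theorem stmt6 : ∃ C : ℝ, 0 < C ∧ ∀ (t : ℝ), 0 ≤ t →
    ∀ (k σ : ℤ), k ≠ 0 → σ ≠ 0 → ∀ ξ ρ : ℝ,
    (jb t) ^ 2 /
        (|(k : ℝ)| * (jb (ξ / (k : ℝ))) ^ 2 * jb (t - ξ / (k : ℝ)) *
          jb (t - ρ / (σ : ℝ))) ≤
      C * (jb2 σ ρ) ^ 2 := by
  refine ⟨2, by norm_num, fun t _ k σ hk hσ ξ ρ => ?_⟩
  set a := ξ / (k : ℝ)
  set b := ρ / (σ : ℝ)
  have hk1 : (1:ℝ) ≤ |(k : ℝ)| := by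
    rw [← Int.cast_abs]; exact_mod_cast Int.one_le_abs hk
  have ha := one_le_jb a
  have hta := one_le_jb (t - a)
  have htb := one_le_jb (t - b)
  have hb := one_le_jb b
  have hD : 0 < |(k : ℝ)| * (jb a) ^ 2 * jb (t - a) * jb (t - b) := by positivity
  rw [div_le_iff₀ hD]
  -- jb b ≤ (jb2 σ ρ)^2
  have hσ1 : (1:ℝ) ≤ (σ : ℝ) ^ 2 := by
    have : (1:ℝ) ≤ |(σ : ℝ)| := by rw [← Int.cast_abs]; exact_mod_cast Int.one_le_abs hσ
    nlinarith [abs_nonneg (σ:ℝ), sq_abs (σ:ℝ)]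
  have hjb2sq : (jb2 σ ρ) ^ 2 = 1 + (σ:ℝ)^2 + ρ^2 := by
    rw [jb2, Real.sq_sqrt]; positivity
  have hbsq : b ^ 2 ≤ ρ ^ 2 := by
    rw [div_pow, div_le_iff₀ (by positivity)]
    nlinarith [sq_nonneg ρ]
  have hbb : jb b ≤ (jb2 σ ρ) ^ 2 := by
    nlinarith [jb_sq b, hb]
  have h1 := jb_tri t a
  have h2 := jb_tri t b
  have hjt : 0 ≤ jb t := Real.sqrt_nonneg _
  have hs2 : Real.sqrt 2 * Real.sqrt 2 = 2 := Real.mul_self_sqrt (by norm_num)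
  have key : (jb t) ^ 2 ≤ 2 * jb a * jb (t - a) * jb b * jb (t - b) := by
    have := mul_le_mul h1 h2 hjt (by positivity)
    nlinarith [Real.sqrt_nonneg 2]
  have hP : (0:ℝ) < jb a * jb (t - a) * jb (t - b) := by positivity
  calc (jb t) ^ 2 ≤ 2 * jb a * jb (t - a) * jb b * jb (t - b) := key
    _ = 2 * jb b * (jb a * jb (t - a) * jb (t - b)) := by ring
    _ ≤ 2 * (jb2 σ ρ) ^ 2 * (jb a * jb (t - a) * jb (t - b)) := by
        apply mul_le_mul_of_nonneg_right _ hP.le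
        nlinarith
    _ ≤ 2 * (jb2 σ ρ) ^ 2 * (|(k:ℝ)| * (jb a) ^ 2 * jb (t - a) * jb (t - b)) := by
        apply mul_le_mul_of_nonneg_left _ (by nlinarith [hbb, hb])
        have h3 : 1 ≤ |(k:ℝ)| * jb a := by nlinarith
        nlinarith [mul_nonneg (by nlinarith : (0:ℝ) ≤ |(k:ℝ)| * jb a - 1) hP.le]
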